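/- Let D be a digraph on n ≥ 3 vertices containing a directed path P := x₁x₂…x_m with 2 ≤ m ≤ n−1, and let x be a vertex not contained in this path. If d(x,P) ≥ m and both x x₁ ∉ A(D) and x_m x ∉ A(D), then there exists an index i with 1 ≤ i ≤ m−1 such that both x_i x and x x_{i+1} are arcs of D; that is, D contains the directed path x₁x₂…x_i x x_{i+1}…x_m of length m (x can be inserted into P). -/
import Mathlib


variable {V : Type*}

/-- Rotate an index of `Fin m` forward by `k` steps (indices mod `m`). -/
def finRot {m : ℕ} (i : Fin m) (k : ℕ) : Fin m :=
  ⟨(i.val + k) % m, Nat.mod_lt _ (Nat.lt_of_le_of_lt (Nat.zero_le i.val) i.isLt)⟩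

/-- `c : Fin k → V` is a directed cycle of length `k`: distinct vertices with an
arc from each vertex to the next one (cyclically). -/
def IsCycle (A : V → V → Prop) {k : ℕ} (c : Fin k → V) : Prop :=
  Function.Injective c ∧ ∀ i, A (c i) (c (finRot i 1))

/-- Out-degree of `x`. -/
def outDeg [Fintype V] (A : V → V → Prop) [DecidableRel A] (x : V) : ℕ :=
  (Finset.univ.filter fun y => A x y).card

/-- In-degree of `x`. -/
def inDeg [Fintype V] (A : V → V → Prop) [DecidableRel A] (x : V) : ℕ :=
  (Finset.univ.filter fun y => A y x).card

/-- Degree of `x`. -/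
def deg [Fintype V] (A : V → V → Prop) [DecidableRel A] (x : V) : ℕ :=
  outDeg A x + inDeg A x

/-- Out-degree of `x` into the set `S`. -/
def outDegOn (A : V → V → Prop) [DecidableRel A] (x : V) (S : Finset V) : ℕ :=
  (S.filter fun y => A x y).card

/-- In-degree of `x` from the set `S`. -/
def inDegOn (A : V → V → Prop) [DecidableRel A] (x : V) (S : Finset V) : ℕ :=
  (S.filter fun y => A y x).card

/-- Degree of `x` with respect to the set `S`. -/
def degOn (A : V → V → Prop) [DecidableRel A] (x : V) (S : Finset V) : ℕ :=
  outDegOn A x S + inDegOn A x S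

/-- The set of indices of the subpath of a cycle on `Fin m` that goes from
index `β` to index `α` (inclusive), following the orientation of the cycle. -/
def cycSeg {m : ℕ} (β α : Fin m) : Finset (Fin m) :=
  (Finset.range ((α.val + m - β.val) % m + 1)).image (finRot β)

/-- Lemma 2 (iii). If a digraph on `n ≥ 3` vertices contains a path
`x₁x₂…x_m` (`2 ≤ m ≤ n-1`) and a vertex `x` off the path with `d(x,P) ≥ m`, and
moreover `x x₁ ∉ A(D)` and `x_m x ∉ A(D)`, then `x` can be inserted into the path. -/
theorem insertion_of_degree_ge
    [Fintype V] [DecidableEq V] (A : V → V → Prop) [DecidableRel A]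
    (hirr : ∀ v : V, ¬ A v v)
    (hn : 3 ≤ Fintype.card V)
    (m : ℕ) (hm2 : 2 ≤ m) (hm : m ≤ Fintype.card V - 1)
    (p : Fin m → V) (hinj : Function.Injective p)
    (hpath : ∀ i j : Fin m, (j : ℕ) = (i : ℕ) + 1 → A (p i) (p j))
    (x : V) (hx : ∀ i : Fin m, x ≠ p i)
    (hdeg : m ≤ degOn A x (Finset.image p Finset.univ))
    (hend₁ : ¬ A x (p ⟨0, by omega⟩)) (hend₂ : ¬ A (p ⟨m - 1, by omega⟩) x) :
    ∃ i j : Fin m, (j : ℕ) = (i : ℕ) + 1 ∧ A (p i) x ∧ A x (p j) := by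
  by_contra hcon
  push_neg at hcon
  -- indicator functions
  set a : ℕ → ℕ := fun i => if h : i < m then (if A x (p ⟨i, h⟩) then 1 else 0) else 0 with ha
  set b : ℕ → ℕ := fun i => if h : i < m then (if A (p ⟨i, h⟩) x then 1 else 0) else 0 with hb
  -- degOn equals the sum
  have hout : outDegOn A x (Finset.image p Finset.univ)
      = ∑ i ∈ Finset.range m, a i := by
    unfold outDegOn
    rw [Finset.filter_image, Finset.card_image_of_injective _ hinj,
      Finset.card_filter, ← Fin.sum_univ_eq_sum_range]
    refine Finset.sum_congr rfl fun i _ => ?_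
    simp [ha, i.isLt]
  have hin : inDegOn A x (Finset.image p Finset.univ)
      = ∑ i ∈ Finset.range m, b i := by
    unfold inDegOn
    rw [Finset.filter_image, Finset.card_image_of_injective _ hinj,
      Finset.card_filter, ← Fin.sum_univ_eq_sum_range]
    refine Finset.sum_congr rfl fun i _ => ?_
    simp [hb, i.isLt]
  have ha0 : a 0 = 0 := by
    simp only [ha]
    rw [dif_pos (by omega : (0:ℕ) < m), if_neg hend₁]
  have hbm : b (m - 1) = 0 := by
    simp only [hb]
    rw [dif_pos (by omega : m - 1 < m), if_neg hend₂]
  have hpair : ∀ i ∈ Finset.range (m - 1), b i + a (i + 1) ≤ 1 := by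
    intro i hi
    rw [Finset.mem_range] at hi
    have h1 : i < m := by omega
    have h2 : i + 1 < m := by omega
    have := hcon ⟨i, h1⟩ ⟨i + 1, h2⟩ rfl
    simp only [ha, hb, dif_pos h1, dif_pos h2]
    by_cases hbi : A (p ⟨i, h1⟩) x
    · have : ¬ A x (p ⟨i + 1, h2⟩) := this hbi
      simp [hbi, this]
    · simp [hbi]
      split <;> omega
  -- rearrange the sums
  have hm1 : m = (m - 1) + 1 := by omega
  have hsa : ∑ i ∈ Finset.range m, a i = (∑ i ∈ Finset.range (m - 1), a (i + 1)) + a 0 := by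
    rw [hm1]; exact Finset.sum_range_succ' a (m - 1)
  have hsb : ∑ i ∈ Finset.range m, b i = (∑ i ∈ Finset.range (m - 1), b i) + b (m - 1) := by
    rw [hm1]; exact Finset.sum_range_succ b (m - 1)
  have hbound : degOn A x (Finset.image p Finset.univ) ≤ m - 1 := by
    unfold degOn
    rw [hout, hin, hsa, hsb, ha0, hbm]
    calc (∑ i ∈ Finset.range (m - 1), a (i + 1)) + 0
          + ((∑ i ∈ Finset.range (m - 1), b i) + 0)
        = ∑ i ∈ Finset.range (m - 1), (b i + a (i + 1)) := by
          rw [Finset.sum_add_distrib]; ring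
      _ ≤ ∑ _i ∈ Finset.range (m - 1), 1 := Finset.sum_le_sum hpair
      _ = m - 1 := by simp
  omega
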